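/- Let ξ and T be positive random variables with lim_{t→∞} P[ξ > t] = 0 = lim_{t→∞} P[T > t] and P[ξ > t] ≤ P[T > t] for every t > 0. Let ξ₁, ξ₂ be independent copies of ξ, let T₁, T₂ be independent copies of T, and let Y be a one-dimensional standard Brownian motion started at 0, independent of all of them. Then for every t > 0, P[η(-ξ₁, ξ₂) > t] ≤ P[η(-T₁, T₂) > t], where η(a, b) = inf{s ≥ 0 : Y_s ∉ (a, b)}. -/

import Mathlib

open MeasureTheory ProbabilityTheory Filter Set
open scoped ENNReal NNReal

noncomputable section

/-- First exit time (valued in `ℝ≥0∞`) of the path `s ↦ Z s ω` from the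
(possibly `ω`-dependent) set `D ω`: the infimum of nonnegative times at which
the path is outside the set (`∞` if the path never leaves). -/
def exitTime {Ω E : Type*} (Z : ℝ → Ω → E) (D : Ω → Set E) (ω : Ω) : ℝ≥0∞ :=
  ⨅ s : {s : ℝ // 0 ≤ s ∧ Z s ω ∉ D ω}, ENNReal.ofReal s.1

/-- `B` is a standard one-dimensional Brownian motion started at `0` under `P`
(in positive time): measurable, starts at 0, continuous paths, independent
increments, Gaussian increments with variance `t - s`. -/
structure IsStdBM1 {Ω : Type*} [MeasurableSpace Ω] (P : Measure Ω) (B : ℝ → Ω → ℝ) : Prop where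
  meas : ∀ t, Measurable (B t)
  start : ∀ ω, B 0 ω = 0
  cont : ∀ ω, Continuous fun t => B t ω
  indep_incr : ∀ (n : ℕ) (t : Fin (n + 1) → ℝ), (∀ i, 0 ≤ t i) → Monotone t →
    iIndepFun
      (fun (i : Fin n) (ω : Ω) => B (t i.succ) ω - B (t i.castSucc) ω) P
  gauss_incr : ∀ s t : ℝ, 0 ≤ s → s ≤ t →
    P.map (fun ω => B t ω - B s ω) = gaussianReal 0 (Real.toNNReal (t - s))

/-- `B` is a standard `n`-dimensional Brownian motion started at `0` under `P`:
the coordinate processes are independent standard one-dimensional Brownian motions. -/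
structure IsStdBM {Ω : Type*} [MeasurableSpace Ω] (n : ℕ) (P : Measure Ω)
    (B : ℝ → Ω → EuclideanSpace ℝ (Fin n)) : Prop where
  coords_indep : iIndepFun
    (fun (i : Fin n) (ω : Ω) => fun t : ℝ => B t ω i) P
  coords_bm : ∀ i : Fin n, IsStdBM1 P fun t ω => B t ω i

/-- Iterated Brownian motion started at `z`, built from the two-sided Brownian motion
determined by `Xp` (positive time) and `Xm` (negative time), time-changed by `Y`:
`Z t ω = z + X (Y t ω) ω`. -/
def IBM {Ω E : Type*} [Add E] (Xp Xm : ℝ → Ω → E) (Y : ℝ → Ω → ℝ) (z : E) :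
    ℝ → Ω → E :=
  fun t ω => z + (if 0 ≤ Y t ω then Xp (Y t ω) ω else Xm (-(Y t ω)) ω)

/-- Brownian-time Brownian motion started at `z`: `Z¹ t ω = z + X (|Y t ω|) ω`. -/
def BTBM {Ω E : Type*} [Add E] (X : ℝ → Ω → E) (Y : ℝ → Ω → ℝ) (z : E) :
    ℝ → Ω → E :=
  fun t ω => z + X (|Y t ω|) ω

/-- The inradius of a set: the supremum of the radii of all balls contained in it. -/
def inradius {E : Type*} [PseudoMetricSpace E] (D : Set E) : ℝ :=
  sSup {r : ℝ | ∃ x, Metric.ball x r ⊆ D}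

/-- The (`ℝ≥0∞`-valued) random time `τ` has probability density `f` under `P`. -/
def HasDensity {Ω : Type*} [MeasurableSpace Ω] (P : Measure Ω) (τ : Ω → ℝ≥0∞)
    (f : ℝ → ℝ) : Prop :=
  (∀ᵐ ω ∂P, τ ω < ⊤) ∧
    P.map (fun ω => (τ ω).toReal) = volume.withDensity fun u => ENNReal.ofReal (f u)



def projI (t s : ℝ) : ℝ := max 0 (min t s)

def pathSup (t : ℝ) (w : ℝ → ℝ) : ℝ := ⨆ q : ℚ, w (projI t (q : ℝ))

def pathInf (t : ℝ) (w : ℝ → ℝ) : ℝ := ⨅ q : ℚ, w (projI t (q : ℝ))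

lemma projI_mem {t : ℝ} (ht : 0 ≤ t) (s : ℝ) : projI t s ∈ Icc (0:ℝ) t := by
  constructor
  · exact le_max_left _ _
  · exact max_le ht (min_le_left _ _)

lemma projI_of_mem {t s : ℝ} (hs : s ∈ Icc (0:ℝ) t) : projI t s = s := by
  simp only [projI, min_eq_right hs.2, max_eq_right hs.1]

lemma projI_continuous (t : ℝ) : Continuous (projI t) :=
  continuous_const.max (continuous_const.min continuous_id)

lemma bddAbove_path {t : ℝ} (ht : 0 ≤ t) {w : ℝ → ℝ} (hw : Continuous w) :
    BddAbove (range fun q : ℚ => w (projI t (q : ℝ))) := by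
  have : (range fun q : ℚ => w (projI t (q : ℝ))) ⊆ w '' Icc 0 t := by
    rintro _ ⟨q, rfl⟩
    exact ⟨projI t q, projI_mem ht _, rfl⟩
  exact ((isCompact_Icc.image hw).bddAbove).mono this

lemma bddBelow_path {t : ℝ} (ht : 0 ≤ t) {w : ℝ → ℝ} (hw : Continuous w) :
    BddBelow (range fun q : ℚ => w (projI t (q : ℝ))) := by
  have : (range fun q : ℚ => w (projI t (q : ℝ))) ⊆ w '' Icc 0 t := by
    rintro _ ⟨q, rfl⟩
    exact ⟨projI t q, projI_mem ht _, rfl⟩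
  exact ((isCompact_Icc.image hw).bddBelow).mono this

lemma measurable_pathSup (t : ℝ) : Measurable (pathSup t) := by
  apply Measurable.isLUB_of_mem (f := fun (q : ℚ) (w : ℝ → ℝ) => w (projI t (q : ℝ)))
    (g' := fun _ => (0:ℝ))
    (fun q => by exact measurable_pi_apply _)
    (s := {w : ℝ → ℝ | ∃ r : ℚ, ∀ q : ℚ, w (projI t (q : ℝ)) ≤ (r : ℝ)})
  · rw [setOf_exists]
    apply MeasurableSet.iUnion (fun r : ℚ => ?_)
    rw [setOf_forall]
    exact MeasurableSet.iInter fun q : ℚ =>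
      (measurable_pi_apply (projI t (q:ℝ))) measurableSet_Iic
  · intro w hw
    obtain ⟨r, hr⟩ := hw
    have hb : BddAbove (range fun q : ℚ => w (projI t (q : ℝ))) :=
      ⟨(r : ℝ), by rintro _ ⟨q, rfl⟩; exact hr q⟩
    exact isLUB_ciSup hb
  · intro w hw
    simp only [mem_compl_iff, mem_setOf_eq, not_exists, not_forall] at hw
    apply Real.iSup_of_not_bddAbove
    rintro ⟨c, hc⟩
    obtain ⟨q, hq⟩ := hw ⌈c⌉
    exact hq (le_trans (hc ⟨q, rfl⟩) (Int.le_ceil c))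
  · exact measurable_const

lemma measurable_pathInf (t : ℝ) : Measurable (pathInf t) := by
  apply Measurable.isGLB_of_mem (f := fun (q : ℚ) (w : ℝ → ℝ) => w (projI t (q : ℝ)))
    (g' := fun _ => (0:ℝ))
    (fun q => by exact measurable_pi_apply _)
    (s := {w : ℝ → ℝ | ∃ r : ℚ, ∀ q : ℚ, (r : ℝ) ≤ w (projI t (q : ℝ))})
  · rw [setOf_exists]
    apply MeasurableSet.iUnion (fun r : ℚ => ?_)
    rw [setOf_forall]
    exact MeasurableSet.iInter fun q : ℚ =>
      (measurable_pi_apply (projI t (q:ℝ))) measurableSet_Ici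
  · intro w hw
    obtain ⟨r, hr⟩ := hw
    have hb : BddBelow (range fun q : ℚ => w (projI t (q : ℝ))) :=
      ⟨(r : ℝ), by rintro _ ⟨q, rfl⟩; exact hr q⟩
    exact isGLB_ciInf hb
  · intro w hw
    simp only [mem_compl_iff, mem_setOf_eq, not_exists, not_forall] at hw
    apply Real.iInf_of_not_bddBelow
    rintro ⟨c, hc⟩
    obtain ⟨q, hq⟩ := hw ⌊c⌋
    exact hq (le_trans (Int.floor_le c) (hc ⟨q, rfl⟩))
  · exact measurable_const

lemma le_pathSup {t : ℝ} (ht : 0 ≤ t) {w : ℝ → ℝ} (hw : Continuous w) {s : ℝ}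
    (hs : s ∈ Icc (0:ℝ) t) : w s ≤ pathSup t w := by
  by_contra h
  push_neg at h
  have hU : IsOpen {u : ℝ | pathSup t w < w (projI t u)} :=
    isOpen_lt continuous_const (hw.comp (projI_continuous t))
  have hsU : s ∈ {u : ℝ | pathSup t w < w (projI t u)} := by
    simpa [projI_of_mem hs] using h
  obtain ⟨ε, hε, hball⟩ := Metric.isOpen_iff.1 hU s hsU
  obtain ⟨q, hq1, hq2⟩ := exists_rat_btwn (show s - ε < s + ε by linarith)
  have hqU : (q : ℝ) ∈ {u : ℝ | pathSup t w < w (projI t u)} := by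
    apply hball
    rw [Metric.mem_ball, Real.dist_eq, abs_sub_lt_iff]
    constructor <;> linarith
  exact absurd (le_ciSup (bddAbove_path ht hw) q) (not_le.2 hqU)

lemma pathInf_le {t : ℝ} (ht : 0 ≤ t) {w : ℝ → ℝ} (hw : Continuous w) {s : ℝ}
    (hs : s ∈ Icc (0:ℝ) t) : pathInf t w ≤ w s := by
  by_contra h
  push_neg at h
  have hU : IsOpen {u : ℝ | w (projI t u) < pathInf t w} :=
    isOpen_lt (hw.comp (projI_continuous t)) continuous_const
  have hsU : s ∈ {u : ℝ | w (projI t u) < pathInf t w} := by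
    simpa [projI_of_mem hs] using h
  obtain ⟨ε, hε, hball⟩ := Metric.isOpen_iff.1 hU s hsU
  obtain ⟨q, hq1, hq2⟩ := exists_rat_btwn (show s - ε < s + ε by linarith)
  have hqU : (q : ℝ) ∈ {u : ℝ | w (projI t u) < pathInf t w} := by
    apply hball
    rw [Metric.mem_ball, Real.dist_eq, abs_sub_lt_iff]
    constructor <;> linarith
  exact absurd (ciInf_le (bddBelow_path ht hw) q) (not_le.2 hqU)

lemma pathSup_lt_iff {t : ℝ} (ht : 0 ≤ t) {w : ℝ → ℝ} (hw : Continuous w) {b : ℝ} :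
    pathSup t w < b ↔ ∀ s ∈ Icc (0:ℝ) t, w s < b := by
  constructor
  · intro h s hs
    exact lt_of_le_of_lt (le_pathSup ht hw hs) h
  · intro h
    obtain ⟨x, hx, hmax⟩ := isCompact_Icc.exists_isMaxOn (⟨0, left_mem_Icc.2 ht⟩ :
      (Icc (0:ℝ) t).Nonempty) hw.continuousOn
    calc pathSup t w ≤ w x := ciSup_le fun q => hmax (projI_mem ht _)
    _ < b := h x hx

lemma lt_pathInf_iff {t : ℝ} (ht : 0 ≤ t) {w : ℝ → ℝ} (hw : Continuous w) {a : ℝ} :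
    a < pathInf t w ↔ ∀ s ∈ Icc (0:ℝ) t, a < w s := by
  constructor
  · intro h s hs
    exact lt_of_lt_of_le h (pathInf_le ht hw hs)
  · intro h
    obtain ⟨x, hx, hmin⟩ := isCompact_Icc.exists_isMinOn (⟨0, left_mem_Icc.2 ht⟩ :
      (Icc (0:ℝ) t).Nonempty) hw.continuousOn
    calc a < w x := h x hx
    _ ≤ pathInf t w := le_ciInf fun q => hmin (projI_mem ht _)

lemma exit_iff {t : ℝ} (ht : 0 < t) {w : ℝ → ℝ} (hw : Continuous w) (a b : ℝ) :
    (ENNReal.ofReal t <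
      ⨅ s : {s : ℝ // 0 ≤ s ∧ w s ∉ Ioo (-a) b}, ENNReal.ofReal s.1) ↔
      (-a < pathInf t w ∧ pathSup t w < b) := by
  rw [lt_pathInf_iff ht.le hw, pathSup_lt_iff ht.le hw]
  have key : (∀ s ∈ Icc (0:ℝ) t, w s ∈ Ioo (-a) b) ↔
      ((∀ s ∈ Icc (0:ℝ) t, -a < w s) ∧ (∀ s ∈ Icc (0:ℝ) t, w s < b)) := by
    constructor
    · exact fun h => ⟨fun s hs => (h s hs).1, fun s hs => (h s hs).2⟩
    · exact fun h s hs => ⟨h.1 s hs, h.2 s hs⟩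
  rw [← key]
  constructor
  · intro h s hs
    by_contra hmem
    have hle : (⨅ s : {s : ℝ // 0 ≤ s ∧ w s ∉ Ioo (-a) b}, ENNReal.ofReal s.1)
        ≤ ENNReal.ofReal s := iInf_le _ (⟨s, hs.1, hmem⟩ : {s : ℝ // 0 ≤ s ∧ w s ∉ Ioo (-a) b})
    exact absurd (h.trans_le hle) (not_lt.2 (ENNReal.ofReal_le_ofReal hs.2))
  · intro h
    have hUopen : IsOpen (w ⁻¹' Ioo (-a) b) := isOpen_Ioo.preimage hw
    have hsub : Icc (0:ℝ) t ⊆ w ⁻¹' Ioo (-a) b := fun s hs => h s hs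
    obtain ⟨δ, hδ, hth⟩ := isCompact_Icc.exists_thickening_subset_open hUopen hsub
    have hstep : ∀ s : {s : ℝ // 0 ≤ s ∧ w s ∉ Ioo (-a) b},
        ENNReal.ofReal (t + δ/2) ≤ ENNReal.ofReal s.1 := by
      rintro ⟨s, hs0, hsnot⟩
      apply ENNReal.ofReal_le_ofReal
      by_contra hlt
      push_neg at hlt
      rcases le_or_gt s t with hst | hst
      · exact hsnot (hsub ⟨hs0, hst⟩)
      · apply hsnot
        apply hth
        rw [Metric.mem_thickening_iff]
        refine ⟨t, right_mem_Icc.2 ht.le, ?_⟩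
        rw [Real.dist_eq, abs_of_pos (by linarith)]
        linarith
    calc ENNReal.ofReal t < ENNReal.ofReal (t + δ/2) := by
          rw [ENNReal.ofReal_lt_ofReal_iff (by linarith)]; linarith
    _ ≤ _ := le_iInf hstep


lemma exit_event_eq {Ω : Type*} [MeasurableSpace Ω] (P : Measure Ω) [IsProbabilityMeasure P]
    (Y : ℝ → Ω → ℝ) (hY : IsStdBM1 P Y) (A B : Ω → ℝ) (hA : Measurable A) (hB : Measurable B)
    (hind : IndepFun (fun ω => (A ω, B ω)) (fun ω (s : ℝ) => Y s ω) P) (t : ℝ) (ht : 0 < t) :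
    P {ω | ENNReal.ofReal t < exitTime Y (fun ω' => Set.Ioo (-(A ω')) (B ω')) ω}
      = ∫⁻ w, (P.map fun ω => (A ω, B ω)) (Ioi (-(pathInf t w)) ×ˢ Ioi (pathSup t w))
          ∂(P.map fun ω (s : ℝ) => Y s ω) := by
  have hJ : Measurable (fun ω (s : ℝ) => Y s ω) := measurable_pi_lambda _ hY.meas
  set S : Set ((ℝ → ℝ) × ℝ × ℝ) :=
    {x | -x.2.1 < pathInf t x.1 ∧ pathSup t x.1 < x.2.2} with hSdef
  have hS : MeasurableSet S := by
    exact (measurableSet_lt (measurable_snd.fst.neg)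
        ((measurable_pathInf t).comp measurable_fst)).inter
      (measurableSet_lt ((measurable_pathSup t).comp measurable_fst) measurable_snd.snd)
  have hevent : {ω | ENNReal.ofReal t < exitTime Y (fun ω' => Set.Ioo (-(A ω')) (B ω')) ω}
      = (fun ω => ((fun s : ℝ => Y s ω), (A ω, B ω))) ⁻¹' S := by
    ext ω
    simp only [mem_setOf_eq, mem_preimage, hSdef, exitTime]
    exact exit_iff ht (hY.cont ω) (A ω) (B ω)
  rw [hevent, ← Measure.map_apply (hJ.prodMk (hA.prodMk hB)) hS,
    (indepFun_iff_map_prod_eq_prod_map_map hJ.aemeasurable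
      ((hA.prodMk hB).aemeasurable)).1 hind.symm,
    Measure.prod_apply hS]
  apply lintegral_congr
  intro w
  congr 1
  ext p
  simp only [mem_preimage, hSdef, mem_setOf_eq, Set.mem_prod, mem_Ioi, neg_lt]

/-- If `ξ` and `T` are positive random variables whose survival functions vanish at
infinity and satisfy `P[ξ > s] ≤ P[T > s]` for all `s > 0`, `ξ₁, ξ₂` are independent
copies of `ξ`, `T₁, T₂` are independent copies of `T`, and `Y` is a standard
one-dimensional Brownian motion independent of them, then for every `t > 0` the exit time
of `Y` from the random interval `(-ξ₁, ξ₂)` is stochastically dominated by the exit time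
of `Y` from `(-T₁, T₂)`. -/
theorem exit_random_interval_comparison {Ω : Type*} [MeasurableSpace Ω] (P : Measure Ω) [IsProbabilityMeasure P]
    (Y : ℝ → Ω → ℝ) (hY : IsStdBM1 P Y)
    (ξ T ξ₁ ξ₂ T₁ T₂ : Ω → ℝ)
    (hξm : Measurable ξ) (hTm : Measurable T) (hξ₁m : Measurable ξ₁)
    (hξ₂m : Measurable ξ₂) (hT₁m : Measurable T₁) (hT₂m : Measurable T₂)
    (hξpos : ∀ ω, 0 < ξ ω) (hTpos : ∀ ω, 0 < T ω)
    (hξlim : Tendsto (fun s : ℝ => P {ω | s < ξ ω}) atTop (nhds 0))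
    (hTlim : Tendsto (fun s : ℝ => P {ω | s < T ω}) atTop (nhds 0))
    (hle : ∀ s : ℝ, 0 < s → P {ω | s < ξ ω} ≤ P {ω | s < T ω})
    (hξ₁d : P.map ξ₁ = P.map ξ) (hξ₂d : P.map ξ₂ = P.map ξ)
    (hT₁d : P.map T₁ = P.map T) (hT₂d : P.map T₂ = P.map T)
    (hξind : IndepFun ξ₁ ξ₂ P) (hTind : IndepFun T₁ T₂ P)
    (hξY : IndepFun (fun ω => (ξ₁ ω, ξ₂ ω)) (fun ω (s : ℝ) => Y s ω) P)
    (hTY : IndepFun (fun ω => (T₁ ω, T₂ ω)) (fun ω (s : ℝ) => Y s ω) P)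
    (t : ℝ) (ht : 0 < t) :
    P {ω | ENNReal.ofReal t < exitTime Y (fun ω' => Set.Ioo (-(ξ₁ ω')) (ξ₂ ω')) ω} ≤
      P {ω | ENNReal.ofReal t < exitTime Y (fun ω' => Set.Ioo (-(T₁ ω')) (T₂ ω')) ω} := by
  have hsurv : ∀ s : ℝ, 0 ≤ s → (P.map ξ) (Ioi s) ≤ (P.map T) (Ioi s) := by
    intro s hs
    rw [Measure.map_apply hξm measurableSet_Ioi, Measure.map_apply hTm measurableSet_Ioi]
    rcases eq_or_lt_of_le hs with h0 | h0
    · have h1 : ξ ⁻¹' Ioi s = univ := eq_univ_of_forall fun ω => by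
        simp only [mem_preimage, mem_Ioi, ← h0]; exact hξpos ω
      have h2 : T ⁻¹' Ioi s = univ := eq_univ_of_forall fun ω => by
        simp only [mem_preimage, mem_Ioi, ← h0]; exact hTpos ω
      rw [h1, h2]
    · exact hle s h0
  have hpairξ : P.map (fun ω => (ξ₁ ω, ξ₂ ω)) = (P.map ξ).prod (P.map ξ) := by
    rw [(indepFun_iff_map_prod_eq_prod_map_map hξ₁m.aemeasurable hξ₂m.aemeasurable).1 hξind,
      hξ₁d, hξ₂d]
  have hpairT : P.map (fun ω => (T₁ ω, T₂ ω)) = (P.map T).prod (P.map T) := by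
    rw [(indepFun_iff_map_prod_eq_prod_map_map hT₁m.aemeasurable hT₂m.aemeasurable).1 hTind,
      hT₁d, hT₂d]
  rw [exit_event_eq P Y hY ξ₁ ξ₂ hξ₁m hξ₂m hξY t ht,
    exit_event_eq P Y hY T₁ T₂ hT₁m hT₂m hTY t ht, hpairξ, hpairT]
  have hJ : Measurable (fun ω (s : ℝ) => Y s ω) := measurable_pi_lambda _ hY.meas
  have hQ : MeasurableSet {w : ℝ → ℝ | pathInf t w ≤ 0 ∧ 0 ≤ pathSup t w} := by
    exact ((measurable_pathInf t) measurableSet_Iic).inter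
      ((measurable_pathSup t) measurableSet_Ici)
  have hae : ∀ᵐ w ∂(P.map fun ω (s : ℝ) => Y s ω), pathInf t w ≤ 0 ∧ 0 ≤ pathSup t w := by
    rw [ae_map_iff hJ.aemeasurable hQ]
    apply ae_of_all
    intro ω
    have h0 : projI t ((0:ℚ):ℝ) = 0 := by
      simp [projI, min_eq_right ht.le]
    constructor
    · have := ciInf_le (bddBelow_path ht.le (hY.cont ω)) (0:ℚ)
      rw [h0] at this
      simpa [pathInf, hY.start ω] using this
    · have := le_ciSup (bddAbove_path ht.le (hY.cont ω)) (0:ℚ)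
      rw [h0] at this
      simpa [pathSup, hY.start ω] using this
  refine lintegral_mono_ae ?_
  filter_upwards [hae] with w hw
  rw [Measure.prod_prod, Measure.prod_prod]
  exact mul_le_mul' (hsurv _ (by linarith [hw.1])) (hsurv _ hw.2)


end
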